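/- Define, for 0 < α < 1/2, v(α) = (2cos(α) − cos(2α))/sin(2α), β̄(α) = arctan((−v(α) + √(v(α)² − ((9/4)cos²(α) − 1)·(5/4 − v(α)²)))/((9/4)cos²(α) − 1)), γ̄(α) = arccos((4/3)·cos(α + β̄(α))), and set w(α) = sin(α)/sin(α + β̄(α)), y(α) = sin(β̄(α))/sin(α + β̄(α)), d(α) = y(α)·sin(2α)/sin(2α + γ̄(α)), x(α) = y(α)·sin(γ̄(α))/sin(2α + γ̄(α)), and C(α) = (3d(α) + 4w(α))/(2·(2 − x(α))·sin(α)). Then C(α) → 5 and (5 − C(α))/sin²(α) → 289/6 as α → 0⁺. -/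

import Mathlib

open Real Filter Topology

noncomputable def vOpt (α : ℝ) : ℝ := (2 * Real.cos α - Real.cos (2 * α)) / Real.sin (2 * α)

noncomputable def betaOpt (α : ℝ) : ℝ :=
  Real.arctan ((-vOpt α + Real.sqrt ((vOpt α) ^ 2 -
      (9 / 4 * (Real.cos α) ^ 2 - 1) * (5 / 4 - (vOpt α) ^ 2))) /
    (9 / 4 * (Real.cos α) ^ 2 - 1))

noncomputable def gammaOpt (α : ℝ) : ℝ := Real.arccos (4 / 3 * Real.cos (α + betaOpt α))

noncomputable def wOpt (α : ℝ) : ℝ := Real.sin α / Real.sin (α + betaOpt α)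

noncomputable def yOpt (α : ℝ) : ℝ := Real.sin (betaOpt α) / Real.sin (α + betaOpt α)

noncomputable def dOpt (α : ℝ) : ℝ :=
  yOpt α * Real.sin (2 * α) / Real.sin (2 * α + gammaOpt α)

noncomputable def xOpt (α : ℝ) : ℝ :=
  yOpt α * Real.sin (gammaOpt α) / Real.sin (2 * α + gammaOpt α)

noncomputable def COpt (α : ℝ) : ℝ :=
  (3 * dOpt α + 4 * wOpt α) / (2 * (2 - xOpt α) * Real.sin α)

noncomputable def Pf (α : ℝ) : ℝ := (2 * Real.cos α - 1 + 2 * Real.sin α ^ 2) / (2 * Real.cos α)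
noncomputable def Af (α : ℝ) : ℝ := (5 - 9 * Real.sin α ^ 2) / 4
noncomputable def Qf (α : ℝ) : ℝ :=
  9 / 4 * Real.cos α ^ 2 * Pf α ^ 2 - 5 * (5 - 9 * Real.sin α ^ 2) / 16 * Real.sin α ^ 2
noncomputable def Rf (α : ℝ) : ℝ := Real.sqrt (Qf α)
noncomputable def Tf (α : ℝ) : ℝ := (Rf α - Pf α) / Af α
noncomputable def Gf (α : ℝ) : ℝ := Real.sin α ^ 2 + Real.cos α * Tf α
noncomputable def Hf (α : ℝ) : ℝ := Real.sin α ^ 2 + Tf α ^ 2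
noncomputable def Kf (α : ℝ) : ℝ := Real.sqrt (Hf α)
noncomputable def uf (α : ℝ) : ℝ := 4 / 3 * (Real.sin α * (Real.cos α - Tf α)) / Kf α
noncomputable def Vf (α : ℝ) : ℝ := Real.sqrt (1 - uf α ^ 2)
noncomputable def Sf (α : ℝ) : ℝ :=
  2 * Real.sin α * Real.cos α * uf α + (1 - 2 * Real.sin α ^ 2) * Vf α
noncomputable def xf (α : ℝ) : ℝ := Tf α * Vf α / (Gf α * Sf α)
noncomputable def Mf (α : ℝ) : ℝ :=
  20 * Gf α * Sf α - 10 * Tf α * Vf α - 6 * Tf α * Real.cos α - 4 * Kf α * Sf α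

local notation "l" => nhdsWithin (0:ℝ) (Set.Ioi 0)

lemma tend_sin : Tendsto (fun α : ℝ => Real.sin α) l (nhds 0) :=
  (Real.continuous_sin.tendsto' 0 0 (by simp)).mono_left nhdsWithin_le_nhds

lemma tend_cos : Tendsto (fun α : ℝ => Real.cos α) l (nhds 1) :=
  (Real.continuous_cos.tendsto' 0 1 (by simp)).mono_left nhdsWithin_le_nhds

lemma tend_sinsq : Tendsto (fun α : ℝ => Real.sin α ^ 2) l (nhds 0) := by
  have := tend_sin.pow 2
  simpa using this

lemma ev_sin_pos : ∀ᶠ α : ℝ in l, 0 < Real.sin α := by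
  have h1 : ∀ᶠ α : ℝ in l, α ∈ Set.Ioo (0:ℝ) 3 :=
    Ioo_mem_nhdsGT_of_mem ⟨le_refl _, by norm_num⟩
  filter_upwards [h1] with α hα
  exact Real.sin_pos_of_pos_of_lt_pi hα.1 (lt_of_lt_of_le hα.2 (by
    have := Real.pi_gt_three; linarith))

lemma ev_sinsq_pos : ∀ᶠ α : ℝ in l, 0 < Real.sin α ^ 2 := by
  filter_upwards [ev_sin_pos] with α h; positivity

lemma ev_cos_pos : ∀ᶠ α : ℝ in l, (1:ℝ)/2 < Real.cos α :=
  tend_cos.eventually (eventually_gt_nhds (by norm_num))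

lemma ev_cos_lt_one : ∀ᶠ α : ℝ in l, Real.cos α < 1 := by
  filter_upwards [ev_sin_pos] with α hα
  nlinarith [Real.sin_sq_add_cos_sq α, Real.cos_le_one α]

lemma tval {f : ℝ → ℝ} {L : Filter ℝ} {a b : ℝ} (h : Tendsto f L (nhds a)) (hab : a = b) :
    Tendsto f L (nhds b) := hab ▸ h

lemma tend_c2 : Tendsto (fun α : ℝ => (Real.cos α - 1) / Real.sin α ^ 2) l (nhds (-(1/2))) := by
  have h : Tendsto (fun α : ℝ => -1 / (1 + Real.cos α)) l (nhds (-(1/2))) := by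
    exact tval (((tendsto_const_nhds (x := (-1:ℝ))).div
      ((tendsto_const_nhds (x := (1:ℝ))).add tend_cos) (by norm_num)).congr
      fun _ => rfl) (by norm_num)
  refine h.congr' ?_
  filter_upwards [ev_sin_pos, ev_cos_pos, ev_cos_lt_one] with α hs hc hc1
  have hp : Real.sin α ^ 2 = (1 - Real.cos α) * (1 + Real.cos α) := by
    nlinarith [Real.sin_sq_add_cos_sq α]
  rw [hp]
  have h1 : (1:ℝ) - Real.cos α ≠ 0 := by linarith
  have h2 : (1:ℝ) + Real.cos α ≠ 0 := by linarith
  field_simp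
  ring

lemma tend_P : Tendsto Pf l (nhds (1/2)) := by
  have h : Tendsto (fun α : ℝ => (2 * Real.cos α - 1 + 2 * Real.sin α ^ 2) / (2 * Real.cos α))
      l (nhds (1/2)) := by
    have hnum : Tendsto (fun α : ℝ => 2 * Real.cos α - 1 + 2 * Real.sin α ^ 2) l (nhds 1) := by
      exact tval ((((tend_cos.const_mul 2).sub (tendsto_const_nhds (x := (1:ℝ)))).add
        (tend_sinsq.const_mul 2)).congr fun _ => rfl) (by norm_num)
    have hden : Tendsto (fun α : ℝ => 2 * Real.cos α) l (nhds 2) :=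
      tval (tend_cos.const_mul 2) (by norm_num)
    exact tval ((hnum.div hden (by norm_num)).congr fun _ => rfl) (by norm_num)
  exact h

lemma tend_P2 : Tendsto (fun α : ℝ => (Pf α - 1/2) / Real.sin α ^ 2) l (nhds (3/4)) := by
  have h : Tendsto (fun α : ℝ =>
      ((Real.cos α - 1) / Real.sin α ^ 2 + 2) / (2 * Real.cos α)) l (nhds (3/4)) := by
    have hnum := tend_c2.add (tendsto_const_nhds (x := (2:ℝ)))
    have hden : Tendsto (fun α : ℝ => 2 * Real.cos α) l (nhds 2) :=
      tval (tend_cos.const_mul 2) (by norm_num)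
    exact tval ((hnum.div hden (by norm_num)).congr fun _ => rfl) (by norm_num)
  refine h.congr' ?_
  filter_upwards [ev_sinsq_pos, ev_cos_pos] with α hs hc
  have h1 : Real.sin α ^ 2 ≠ 0 := ne_of_gt hs
  have h1' : Real.sin α ≠ 0 := fun h => h1 (by rw [h]; ring)
  have h2 : Real.cos α ≠ 0 := by linarith
  unfold Pf
  field_simp
  ring

lemma cos_sq_eq (α : ℝ) : Real.cos α ^ 2 = 1 - Real.sin α ^ 2 := by
  nlinarith [Real.sin_sq_add_cos_sq α]

lemma tend_A : Tendsto Af l (nhds (5/4)) := by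
  unfold Af
  exact tval ((((tendsto_const_nhds (x := (5:ℝ))).sub (tend_sinsq.const_mul 9)).div
    tendsto_const_nhds (by norm_num)).congr fun _ => rfl) (by norm_num)

lemma tend_Q : Tendsto Qf l (nhds (9/16)) := by
  unfold Qf
  have hc2 : Tendsto (fun α : ℝ => Real.cos α ^ 2) l (nhds 1) := by
    exact tval ((tend_cos.pow 2).congr fun _ => rfl) (by norm_num)
  have hp2 : Tendsto (fun α : ℝ => Pf α ^ 2) l (nhds (1/4)) :=
    tval ((tend_P.pow 2).congr fun _ => rfl) (by norm_num)
  exact tval ((((hc2.const_mul (9/4)).mul hp2).sub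
    (((((tendsto_const_nhds (x := (5:ℝ))).sub (tend_sinsq.const_mul 9)).const_mul 5).div_const
      16).mul tend_sinsq)).congr fun _ => by ring) (by norm_num)

lemma ev_Q_pos : ∀ᶠ α : ℝ in l, (1:ℝ)/2 < Qf α :=
  tend_Q.eventually (eventually_gt_nhds (by norm_num))

lemma tend_Q2 : Tendsto (fun α : ℝ => (Qf α - 9/16) / Real.sin α ^ 2) l (nhds (-(7/16))) := by
  have h : Tendsto (fun α : ℝ =>
      9/4 * Real.cos α ^ 2 * ((Pf α - 1/2) / Real.sin α ^ 2) * (Pf α + 1/2)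
        - 9/16 - 25/16 + 45/16 * Real.sin α ^ 2) l (nhds (-(7/16))) := by
    have hc2 : Tendsto (fun α : ℝ => Real.cos α ^ 2) l (nhds 1) :=
      tval ((tend_cos.pow 2).congr fun _ => rfl) (by norm_num)
    exact tval (((((hc2.const_mul (9/4)).mul tend_P2).mul
      (tend_P.add (tendsto_const_nhds (x := (1/2:ℝ))))).sub
      (tendsto_const_nhds (x := (9/16:ℝ))) |>.sub (tendsto_const_nhds (x := (25/16:ℝ))) |>.add
      (tend_sinsq.const_mul (45/16))).congr fun _ => by ring) (by norm_num)
  refine h.congr' ?_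
  filter_upwards [ev_sinsq_pos] with α hs
  have h1 : Real.sin α ^ 2 ≠ 0 := ne_of_gt hs
  have h1' : Real.sin α ≠ 0 := fun h => h1 (by rw [h]; ring)
  rw [Qf, cos_sq_eq α]
  field_simp
  ring

lemma tend_R : Tendsto Rf l (nhds (3/4)) := by
  have := (Real.continuous_sqrt.tendsto (9/16 : ℝ)).comp tend_Q
  have hv : Real.sqrt (9/16 : ℝ) = 3/4 := by
    rw [show (9/16:ℝ) = (3/4)^2 by norm_num, Real.sqrt_sq (by norm_num)]
  exact tval (this.congr fun _ => rfl) hv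

lemma tend_R2 : Tendsto (fun α : ℝ => (Rf α - 3/4) / Real.sin α ^ 2) l (nhds (-(7/24))) := by
  have h : Tendsto (fun α : ℝ =>
      ((Qf α - 9/16) / Real.sin α ^ 2) / (Rf α + 3/4)) l (nhds (-(7/24))) :=
    tval (tend_Q2.div (tend_R.add tendsto_const_nhds) (by norm_num)) (by norm_num)
  refine h.congr' ?_
  filter_upwards [ev_sinsq_pos, ev_Q_pos] with α hs hQ
  have h1 : Real.sin α ^ 2 ≠ 0 := ne_of_gt hs
  have hR2 : Rf α ^ 2 = Qf α := Real.sq_sqrt (by linarith)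
  have hRpos : (0:ℝ) < Rf α + 3/4 := by
    have := Real.sqrt_nonneg (Qf α); unfold Rf; linarith
  have hRne : Rf α + 3/4 ≠ 0 := ne_of_gt hRpos
  rw [← hR2, div_div, div_eq_div_iff (mul_ne_zero h1 hRne) h1]
  ring

lemma ev_A_pos : ∀ᶠ α : ℝ in l, (1:ℝ) < Af α :=
  tend_A.eventually (eventually_gt_nhds (by norm_num))

lemma tend_T : Tendsto Tf l (nhds (1/5)) := by
  unfold Tf
  exact tval ((tend_R.sub tend_P).div tend_A (by norm_num)) (by norm_num)

lemma tend_T2 : Tendsto (fun α : ℝ => (Tf α - 1/5) / Real.sin α ^ 2) l (nhds (-(71/150))) := by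
  have h : Tendsto (fun α : ℝ =>
      ((Rf α - 3/4) / Real.sin α ^ 2 - (Pf α - 1/2) / Real.sin α ^ 2 + 9/20) / Af α)
      l (nhds (-(71/150))) :=
    tval (((tend_R2.sub tend_P2).add (tendsto_const_nhds (x := (9/20:ℝ)))).div tend_A
      (by norm_num)) (by norm_num)
  refine h.congr' ?_
  filter_upwards [ev_sinsq_pos, ev_A_pos] with α hs hA
  have h1 : Real.sin α ^ 2 ≠ 0 := ne_of_gt hs
  have h1' : Real.sin α ≠ 0 := fun h => h1 (by rw [h]; ring)
  have h2 : Af α ≠ 0 := by linarith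
  have h3 : Af α = (5 - 9 * Real.sin α ^ 2) / 4 := rfl
  rw [Tf]
  field_simp
  rw [h3]
  field_simp
  ring

lemma tend_G : Tendsto Gf l (nhds (1/5)) := by
  unfold Gf
  exact tval (tend_sinsq.add (tend_cos.mul tend_T)) (by norm_num)

lemma tend_G2 : Tendsto (fun α : ℝ => (Gf α - 1/5) / Real.sin α ^ 2) l (nhds (32/75)) := by
  have h : Tendsto (fun α : ℝ =>
      1 + Real.cos α * ((Tf α - 1/5) / Real.sin α ^ 2) + ((Real.cos α - 1) / Real.sin α ^ 2) / 5)
      l (nhds (32/75)) :=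
    tval (((tendsto_const_nhds (x := (1:ℝ))).add (tend_cos.mul tend_T2)).add
      (tend_c2.div_const 5)) (by norm_num)
  refine h.congr' ?_
  filter_upwards [ev_sinsq_pos] with α hs
  have h1 : Real.sin α ^ 2 ≠ 0 := ne_of_gt hs
  have h1' : Real.sin α ≠ 0 := fun h => h1 (by rw [h]; ring)
  rw [Gf]
  field_simp
  ring

lemma tend_H : Tendsto Hf l (nhds (1/25)) := by
  unfold Hf
  exact tval (tend_sinsq.add ((tend_T.pow 2).congr fun _ => rfl)) (by norm_num)

lemma tend_H2 : Tendsto (fun α : ℝ => (Hf α - 1/25) / Real.sin α ^ 2) l (nhds (304/375)) := by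
  have h : Tendsto (fun α : ℝ =>
      1 + ((Tf α - 1/5) / Real.sin α ^ 2) * (Tf α + 1/5)) l (nhds (304/375)) :=
    tval ((tendsto_const_nhds (x := (1:ℝ))).add (tend_T2.mul
      (tend_T.add (tendsto_const_nhds (x := (1/5:ℝ)))))) (by norm_num)
  refine h.congr' ?_
  filter_upwards [ev_sinsq_pos] with α hs
  have h1 : Real.sin α ^ 2 ≠ 0 := ne_of_gt hs
  have h1' : Real.sin α ≠ 0 := fun h => h1 (by rw [h]; ring)
  rw [Hf]
  field_simp
  ring

lemma ev_H_pos : ∀ᶠ α : ℝ in l, (0:ℝ) < Hf α := by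
  filter_upwards [ev_sinsq_pos] with α hs
  have : (0:ℝ) ≤ Tf α ^ 2 := sq_nonneg _
  unfold Hf; linarith

lemma tend_K : Tendsto Kf l (nhds (1/5)) := by
  have := (Real.continuous_sqrt.tendsto (1/25 : ℝ)).comp tend_H
  have hv : Real.sqrt (1/25 : ℝ) = 1/5 := by
    rw [show (1/25:ℝ) = (1/5)^2 by norm_num, Real.sqrt_sq (by norm_num)]
  exact tval (this.congr fun _ => rfl) hv

lemma ev_K_pos : ∀ᶠ α : ℝ in l, (1:ℝ)/10 < Kf α :=
  tend_K.eventually (eventually_gt_nhds (by norm_num))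

lemma tend_K2 : Tendsto (fun α : ℝ => (Kf α - 1/5) / Real.sin α ^ 2) l (nhds (152/75)) := by
  have h : Tendsto (fun α : ℝ =>
      ((Hf α - 1/25) / Real.sin α ^ 2) / (Kf α + 1/5)) l (nhds (152/75)) :=
    tval (tend_H2.div (tend_K.add (tendsto_const_nhds (x := (1/5:ℝ)))) (by norm_num))
      (by norm_num)
  refine h.congr' ?_
  filter_upwards [ev_sinsq_pos, ev_H_pos] with α hs hH
  have h1 : Real.sin α ^ 2 ≠ 0 := ne_of_gt hs
  have hK2 : Kf α ^ 2 = Hf α := Real.sq_sqrt (le_of_lt hH)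
  have hKpos : (0:ℝ) < Kf α + 1/5 := by
    have := Real.sqrt_nonneg (Hf α); unfold Kf; linarith
  have hKne : Kf α + 1/5 ≠ 0 := ne_of_gt hKpos
  rw [← hK2, div_div, div_eq_div_iff (mul_ne_zero h1 hKne) h1]
  ring

lemma tend_us : Tendsto (fun α : ℝ => uf α / Real.sin α) l (nhds (16/3)) := by
  have h : Tendsto (fun α : ℝ => 4/3 * (Real.cos α - Tf α) / Kf α) l (nhds (16/3)) :=
    tval (((tend_cos.sub tend_T).const_mul (4/3)).div tend_K (by norm_num)) (by norm_num)
  refine h.congr' ?_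
  filter_upwards [ev_sin_pos, ev_K_pos] with α hs hK
  have h1 : Real.sin α ≠ 0 := ne_of_gt hs
  have h2 : Kf α ≠ 0 := by linarith
  rw [uf]
  field_simp

lemma tend_u : Tendsto uf l (nhds 0) := by
  have h := tval (tend_us.mul tend_sin) (by norm_num : (16:ℝ)/3 * 0 = 0)
  refine h.congr' ?_
  filter_upwards [ev_sin_pos] with α hs
  field_simp

lemma ev_u_small : ∀ᶠ α : ℝ in l, |uf α| < 1/2 := by
  have h := Metric.tendsto_nhds.mp tend_u (1/2) (by norm_num)
  filter_upwards [h] with α hα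
  simpa [Real.dist_eq] using hα

lemma tend_V : Tendsto Vf l (nhds 1) := by
  have h : Tendsto (fun α : ℝ => 1 - uf α ^ 2) l (nhds 1) :=
    tval ((tendsto_const_nhds (x := (1:ℝ))).sub ((tend_u.pow 2).congr fun _ => rfl))
      (by norm_num)
  have := (Real.continuous_sqrt.tendsto (1 : ℝ)).comp h
  exact tval (this.congr fun _ => rfl) (by simp)

lemma tend_V2 : Tendsto (fun α : ℝ => (Vf α - 1) / Real.sin α ^ 2) l (nhds (-(128/9))) := by
  have h : Tendsto (fun α : ℝ => -((uf α / Real.sin α) ^ 2) / (Vf α + 1)) l (nhds (-(128/9))) := by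
    have hn : Tendsto (fun α : ℝ => -((uf α / Real.sin α) ^ 2)) l (nhds (-(256/9))) :=
      tval (((tend_us.pow 2).neg).congr fun _ => rfl) (by norm_num)
    exact tval (hn.div (tend_V.add (tendsto_const_nhds (x := (1:ℝ)))) (by norm_num)) (by norm_num)
  refine h.congr' ?_
  filter_upwards [ev_sinsq_pos, ev_u_small] with α hs hu
  have h1 : Real.sin α ^ 2 ≠ 0 := ne_of_gt hs
  have husq : uf α ^ 2 ≤ 1 := by
    have := abs_lt.mp hu
    nlinarith
  have hV2 : Vf α ^ 2 = 1 - uf α ^ 2 := Real.sq_sqrt (by linarith)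
  have hVpos : (0:ℝ) < Vf α + 1 := by
    have := Real.sqrt_nonneg (1 - uf α ^ 2); unfold Vf; linarith
  have hVne : Vf α + 1 ≠ 0 := ne_of_gt hVpos
  have hsne : Real.sin α ≠ 0 := fun h => h1 (by rw [h]; ring)
  have key : Vf α - 1 = -(uf α ^ 2) / (Vf α + 1) := by
    rw [eq_div_iff hVne]; nlinarith
  rw [key]
  field_simp

lemma tend_S : Tendsto Sf l (nhds 1) := by
  unfold Sf
  have h1 : Tendsto (fun α : ℝ => 2 * Real.sin α * Real.cos α * uf α) l (nhds 0) := by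
    have := (((tend_sin.const_mul 2).mul tend_cos).mul tend_u)
    exact tval (this.congr fun _ => rfl) (by norm_num)
  have h2 : Tendsto (fun α : ℝ => (1 - 2 * Real.sin α ^ 2) * Vf α) l (nhds 1) := by
    have := (((tendsto_const_nhds (x := (1:ℝ))).sub (tend_sinsq.const_mul 2)).mul tend_V)
    exact tval this (by norm_num)
  exact tval (h1.add h2) (by norm_num)

lemma ev_S_pos : ∀ᶠ α : ℝ in l, (1:ℝ)/2 < Sf α :=
  tend_S.eventually (eventually_gt_nhds (by norm_num))

lemma ev_G_pos : ∀ᶠ α : ℝ in l, (1:ℝ)/10 < Gf α :=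
  tend_G.eventually (eventually_gt_nhds (by norm_num))

lemma tend_S2 : Tendsto (fun α : ℝ => (Sf α - 1) / Real.sin α ^ 2) l (nhds (-(50/9))) := by
  have h : Tendsto (fun α : ℝ =>
      2 * Real.cos α * (uf α / Real.sin α) + (Vf α - 1) / Real.sin α ^ 2 - 2 * Vf α)
      l (nhds (-(50/9))) :=
    tval ((((tend_cos.const_mul 2).mul tend_us).add tend_V2).sub (tend_V.const_mul 2))
      (by norm_num)
  refine h.congr' ?_
  filter_upwards [ev_sinsq_pos] with α hs
  have hsne : Real.sin α ≠ 0 := by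
    intro h; rw [h] at hs; simp at hs
  rw [Sf]
  field_simp
  ring

lemma tend_M2 : Tendsto (fun α : ℝ => Mf α / Real.sin α ^ 2) l (nhds (289/15)) := by
  have h : Tendsto (fun α : ℝ =>
      20 * (Gf α * ((Sf α - 1) / Real.sin α ^ 2) + (Gf α - 1/5) / Real.sin α ^ 2)
      - 10 * (Tf α * ((Vf α - 1) / Real.sin α ^ 2) + (Tf α - 1/5) / Real.sin α ^ 2)
      - 6 * (Tf α * ((Real.cos α - 1) / Real.sin α ^ 2) + (Tf α - 1/5) / Real.sin α ^ 2)
      - 4 * (Kf α * ((Sf α - 1) / Real.sin α ^ 2) + (Kf α - 1/5) / Real.sin α ^ 2))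
      l (nhds (289/15)) := by
    have t1 := ((tend_G.mul tend_S2).add tend_G2).const_mul 20
    have t2 := ((tend_T.mul tend_V2).add tend_T2).const_mul 10
    have t3 := ((tend_T.mul tend_c2).add tend_T2).const_mul 6
    have t4 := ((tend_K.mul tend_S2).add tend_K2).const_mul 4
    exact tval (((t1.sub t2).sub t3).sub t4) (by norm_num)
  refine h.congr' ?_
  filter_upwards [ev_sinsq_pos] with α hs
  have h1 : Real.sin α ^ 2 ≠ 0 := ne_of_gt hs
  rw [Mf]
  field_simp
  ring

lemma tend_x : Tendsto xf l (nhds 1) := by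
  unfold xf
  exact tval ((tend_T.mul tend_V).div (tend_G.mul tend_S) (by norm_num)) (by norm_num)

lemma ev_x_lt : ∀ᶠ α : ℝ in l, xf α < 3/2 :=
  tend_x.eventually (eventually_lt_nhds (by norm_num))

lemma tend_final : Tendsto (fun α : ℝ =>
    (Mf α / Real.sin α ^ 2) / (2 * (2 - xf α) * Gf α * Sf α)) l (nhds (289/6)) := by
  have hden : Tendsto (fun α : ℝ => 2 * (2 - xf α) * Gf α * Sf α) l (nhds (2/5)) := by
    have := ((((tendsto_const_nhds (x := (2:ℝ))).sub tend_x).const_mul 2).mul tend_G).mul tend_S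
    exact tval (this.congr fun _ => rfl) (by norm_num)
  exact tval (tend_M2.div hden (by norm_num)) (by norm_num)

set_option maxHeartbeats 1000000 in
lemma ident_pt (α : ℝ) (hs : 0 < Real.sin α) (hc : 1/2 < Real.cos α) (hA : 1 < Af α)
    (hG : 1/10 < Gf α) (hK : 1/10 < Kf α) (hS : 1/2 < Sf α) (hu : |uf α| < 1/2)
    (hx : xf α < 3/2) :
    COpt α = 5 - Mf α / (2 * (2 - xf α) * Gf α * Sf α) := by
  have hs0 : (0:ℝ) ≤ Real.sin α := le_of_lt hs
  have hsne : Real.sin α ≠ 0 := ne_of_gt hs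
  have hcne : Real.cos α ≠ 0 := by linarith
  have hAne : Af α ≠ 0 := by linarith
  have hGne : Gf α ≠ 0 := by linarith
  have hKne : Kf α ≠ 0 := by linarith
  have hSne : Sf α ≠ 0 := by linarith
  have hA' : 9 / 4 * (Real.cos α) ^ 2 - 1 = Af α := by
    rw [cos_sq_eq, Af]; ring
  have hsv : Real.sin α * vOpt α = Pf α := by
    rw [vOpt, Real.sin_two_mul, Real.cos_two_mul, cos_sq_eq, Pf]
    field_simp
    ring
  set t : ℝ := ((-vOpt α + Real.sqrt ((vOpt α) ^ 2 -
      (9 / 4 * (Real.cos α) ^ 2 - 1) * (5 / 4 - (vOpt α) ^ 2))) /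
    (9 / 4 * (Real.cos α) ^ 2 - 1)) with ht
  have hb : betaOpt α = Real.arctan t := rfl
  have hv2 : Real.sin α ^ 2 * vOpt α ^ 2 = Pf α ^ 2 := by
    linear_combination (Real.sin α * vOpt α + Pf α) * hsv
  have h2 : Real.sin α ^ 2 * ((vOpt α) ^ 2 -
      (9 / 4 * (Real.cos α) ^ 2 - 1) * (5 / 4 - (vOpt α) ^ 2)) = Qf α := by
    rw [Qf]
    linear_combination (9/4 * Real.cos α ^ 2) * hv2 -
      (45/16 * Real.sin α ^ 2) * (cos_sq_eq α)
  have h1 : Real.sin α * Real.sqrt ((vOpt α) ^ 2 -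
      (9 / 4 * (Real.cos α) ^ 2 - 1) * (5 / 4 - (vOpt α) ^ 2)) = Rf α := by
    rw [show Real.sin α = Real.sqrt (Real.sin α ^ 2) from (Real.sqrt_sq hs0).symm,
      ← Real.sqrt_mul (sq_nonneg _), h2]
    rfl
  have hst : Real.sin α * t = Tf α := by
    rw [ht, Tf, ← hA', ← mul_div_assoc]
    congr 1
    rw [mul_add, mul_neg, hsv, h1]
    ring
  have hq : (0:ℝ) < Real.sqrt (1 + t ^ 2) := Real.sqrt_pos.mpr (by positivity)
  have hqne : Real.sqrt (1 + t ^ 2) ≠ 0 := ne_of_gt hq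
  have hKeq : Real.sin α * Real.sqrt (1 + t ^ 2) = Kf α := by
    rw [show Real.sin α = Real.sqrt (Real.sin α ^ 2) from (Real.sqrt_sq hs0).symm,
      ← Real.sqrt_mul (sq_nonneg _)]
    rw [Kf, Hf]
    congr 1
    rw [← hst]
    ring
  have hsinab : Real.sin (α + betaOpt α) = Gf α / Kf α := by
    rw [Real.sin_add, hb, Real.sin_arctan, Real.cos_arctan]
    rw [show Gf α = Real.sin α ^ 2 + Real.cos α * (Real.sin α * t) by rw [Gf, hst],
      ← hKeq]
    field_simp
  have hsinb : Real.sin (betaOpt α) = Tf α / Kf α := by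
    rw [hb, Real.sin_arctan, ← hst, ← hKeq]
    field_simp
  have hcosab : Real.cos (α + betaOpt α) = Real.sin α * (Real.cos α - Tf α) / Kf α := by
    rw [Real.cos_add, hb, Real.sin_arctan, Real.cos_arctan, ← hst, ← hKeq]
    field_simp
  have hg : gammaOpt α = Real.arccos (uf α) := by
    rw [gammaOpt, hcosab]
    congr 1
    rw [uf]
    ring
  have hub := abs_lt.mp hu
  have hcosg : Real.cos (gammaOpt α) = uf α := by
    rw [hg]
    exact Real.cos_arccos (by linarith [hub.1]) (by linarith [hub.2])
  have hsing : Real.sin (gammaOpt α) = Vf α := by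
    rw [hg, Real.sin_arccos, Vf]
  have hS2 : Real.sin (2 * α + gammaOpt α) = Sf α := by
    rw [Real.sin_add, Real.sin_two_mul, Real.cos_two_mul, cos_sq_eq, hcosg, hsing, Sf]
    ring
  have hw : wOpt α = Real.sin α * Kf α / Gf α := by
    rw [wOpt, hsinab, div_div_eq_mul_div]
  have hy : yOpt α = Tf α / Gf α := by
    rw [yOpt, hsinb, hsinab]
    field_simp
  have hd : dOpt α = Tf α * (2 * Real.sin α * Real.cos α) / (Gf α * Sf α) := by
    rw [dOpt, hy, hS2, Real.sin_two_mul]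
    field_simp
  have hxeq : xOpt α = xf α := by
    rw [xOpt, hy, hsing, hS2, xf]
    field_simp
  have hGS : (0:ℝ) < Gf α * Sf α := by nlinarith
  rw [xf] at hx
  have hTV : Tf α * Vf α < 3/2 * (Gf α * Sf α) := by
    exact (div_lt_iff₀ hGS).mp hx
  have hE : (0:ℝ) < 2 * (Gf α * Sf α) - Tf α * Vf α := by nlinarith
  have hEne : 2 * (Gf α * Sf α) - Tf α * Vf α ≠ 0 := ne_of_gt hE
  rw [COpt, hd, hw, hxeq, xf, Mf]
  have hrw : (2:ℝ) - Tf α * Vf α / (Gf α * Sf α)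
      = (2 * (Gf α * Sf α) - Tf α * Vf α) / (Gf α * Sf α) := by
    field_simp
  rw [hrw]
  field_simp
  ring_nf
  have hEne' : -(Tf α * Vf α) + Sf α * Gf α * 2 ≠ 0 := by intro h; apply hEne; linarith
  field_simp
  ring

lemma ev_ident : ∀ᶠ α : ℝ in l, COpt α = 5 - Mf α / (2 * (2 - xf α) * Gf α * Sf α) := by
  filter_upwards [ev_sin_pos, ev_cos_pos, ev_A_pos, ev_G_pos, ev_K_pos, ev_S_pos,
    ev_u_small, ev_x_lt] with α h1 h2 h3 h4 h5 h6 h7 h8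
  exact ident_pt α h1 h2 h3 h4 h5 h6 h7 h8

lemma second_limit :
    Tendsto (fun α : ℝ => (5 - COpt α) / (Real.sin α) ^ 2) l (nhds (289/6)) := by
  refine tend_final.congr' ?_
  filter_upwards [ev_ident] with α hα
  rw [hα]
  ring

theorem stmt17 :
    Tendsto (fun α : ℝ => COpt α) (𝓝[>] 0) (𝓝 5) ∧
      Tendsto (fun α : ℝ => (5 - COpt α) / (Real.sin α) ^ 2) (𝓝[>] 0) (𝓝 (289 / 6)) := by
  constructor
  · have h : Tendsto (fun α : ℝ =>
        5 - Real.sin α ^ 2 * ((5 - COpt α) / Real.sin α ^ 2)) (𝓝[>] (0:ℝ)) (𝓝 5) :=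
      tval ((tendsto_const_nhds (x := (5:ℝ))).sub (tend_sinsq.mul second_limit))
        (by norm_num)
    refine h.congr' ?_
    filter_upwards [ev_sinsq_pos] with α hs
    have h1 : Real.sin α ^ 2 ≠ 0 := ne_of_gt hs
    rw [mul_div_cancel₀ _ h1]
    ring
  · exact second_limit
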